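/- Let Q be a finite subgroup of Houghton's group H_n. Then the centralizer C_{H_n}(Q) is isomorphic as a group to the direct product H_n × E for some finite group E. In particular, C_{H_n}(Q) contains a finite-index subgroup isomorphic to H_n. -/

import Mathlib

/-- `f : ℕ × Fin n → ℕ × Fin n` is eventually a translation with translation
vector `m : Fin n → ℤ`: on each ray `ℕ × {x}`, for all sufficiently large `i`,
`f` sends `(i, x)` to `(i + m x, x)`. -/
def EvTrans (n : ℕ) (f : ℕ × Fin n → ℕ × Fin n) (m : Fin n → ℤ) : Prop :=
  ∀ x : Fin n, ∃ z : ℕ, ∀ i : ℕ, z ≤ i →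
    (f (i, x)).2 = x ∧ ((f (i, x)).1 : ℤ) = (i : ℤ) + m x

/-- Houghton's group `H_n`: the subgroup of the symmetric group on
`S = ℕ × Fin n` consisting of the permutations that are eventually
translations on each ray. -/
def Houghton (n : ℕ) : Subgroup (Equiv.Perm (ℕ × Fin n)) where
  carrier := {f : Equiv.Perm (ℕ × Fin n) | ∃ m : Fin n → ℤ, EvTrans n (⇑f) m}
  one_mem' := ⟨0, fun x => ⟨0, fun i _ => by simp⟩⟩
  mul_mem' := by
    rintro a b ⟨ma, hA⟩ ⟨mb, hB⟩
    refine ⟨ma + mb, fun x => ?_⟩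
    obtain ⟨za, hza⟩ := hA x
    obtain ⟨zb, hzb⟩ := hB x
    refine ⟨max zb ((za : ℤ) - mb x).toNat, fun i hi => ?_⟩
    have hib : zb ≤ i := le_trans (le_max_left _ _) hi
    obtain ⟨h2, h1⟩ := hzb i hib
    have hbx : (⇑b) (i, x) = ((b (i, x)).1, x) := Prod.ext_iff.mpr ⟨rfl, h2⟩
    have hk : za ≤ (b (i, x)).1 := by
      have h3 : ((za : ℤ) - mb x) ≤ (i : ℤ) := by
        calc ((za : ℤ) - mb x) ≤ (((za : ℤ) - mb x).toNat : ℤ) := Int.self_le_toNat _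
          _ ≤ (i : ℤ) := by exact_mod_cast le_trans (le_max_right _ _) hi
      have h4 : (za : ℤ) ≤ ((b (i, x)).1 : ℤ) := by rw [h1]; linarith
      exact_mod_cast h4
    obtain ⟨h4, h5⟩ := hza (b (i, x)).1 hk
    constructor
    · show ((a * b) (i, x)).2 = x
      rw [Equiv.Perm.mul_apply, hbx]
      exact h4
    · show (((a * b) (i, x)).1 : ℤ) = (i : ℤ) + (ma + mb) x
      rw [Equiv.Perm.mul_apply, hbx, h5, h1, Pi.add_apply]
      ring
  inv_mem' := by
    rintro a ⟨m, hm⟩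
    refine ⟨-m, fun x => ?_⟩
    obtain ⟨z, hz⟩ := hm x
    refine ⟨((z : ℤ) + m x).toNat, fun i hi => ?_⟩
    have h1 : (z : ℤ) + m x ≤ (i : ℤ) :=
      le_trans (Int.self_le_toNat _) (by exact_mod_cast hi)
    have h0 : (0 : ℤ) ≤ (i : ℤ) - m x := by
      have hz0 : (0 : ℤ) ≤ (z : ℤ) := Int.natCast_nonneg z
      linarith
    set j := ((i : ℤ) - m x).toNat with hjdef
    have hj' : (j : ℤ) = (i : ℤ) - m x := Int.toNat_of_nonneg h0
    have hjz : z ≤ j := by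
      have : (z : ℤ) ≤ (j : ℤ) := by rw [hj']; linarith
      exact_mod_cast this
    obtain ⟨h2, h3⟩ := hz j hjz
    have hfst : (a (j, x)).1 = i := by
      have : ((a (j, x)).1 : ℤ) = (i : ℤ) := by rw [h3, hj']; ring
      exact_mod_cast this
    have hfix : (⇑a) (j, x) = (i, x) := Prod.ext_iff.mpr ⟨hfst, h2⟩
    have hinv : (⇑a⁻¹) (i, x) = (j, x) := by
      rw [← hfix]
      first
        | exact Equiv.symm_apply_apply a (j, x)
        | simp
    constructor
    · rw [hinv]
    · rw [hinv]
      show (j : ℤ) = (i : ℤ) + (-m) x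
      rw [hj', Pi.neg_apply]
      ring

open Equiv Nat Finset

namespace HoughtonAux

lemma evTrans_one (n : ℕ) : EvTrans n (⇑(1 : Perm (ℕ × Fin n))) 0 :=
  fun _x => ⟨0, fun i _ => by simp⟩

lemma evTrans_unique {n : ℕ} {f : ℕ × Fin n → ℕ × Fin n} {m m' : Fin n → ℤ}
    (h : EvTrans n f m) (h' : EvTrans n f m') : m = m' := by
  funext x
  obtain ⟨z, hz⟩ := h x
  obtain ⟨z', hz'⟩ := h' x
  have h1 := (hz (max z z') (le_max_left _ _)).2
  have h2 := (hz' (max z z') (le_max_right _ _)).2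
  rw [h1] at h2; linarith

lemma evTrans_mul {n : ℕ} {a b : Perm (ℕ × Fin n)} {ma mb : Fin n → ℤ}
    (hA : EvTrans n (⇑a) ma) (hB : EvTrans n (⇑b) mb) :
    EvTrans n (⇑(a * b)) (ma + mb) := by
  intro x
  obtain ⟨za, hza⟩ := hA x
  obtain ⟨zb, hzb⟩ := hB x
  refine ⟨max zb ((za : ℤ) - mb x).toNat, fun i hi => ?_⟩
  have hib : zb ≤ i := le_trans (le_max_left _ _) hi
  obtain ⟨h2, h1⟩ := hzb i hib
  have hbx : (⇑b) (i, x) = ((b (i, x)).1, x) := Prod.ext_iff.mpr ⟨rfl, h2⟩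
  have hk : za ≤ (b (i, x)).1 := by
    have h3 : ((za : ℤ) - mb x) ≤ (i : ℤ) := by
      calc ((za : ℤ) - mb x) ≤ (((za : ℤ) - mb x).toNat : ℤ) := Int.self_le_toNat _
        _ ≤ (i : ℤ) := by exact_mod_cast le_trans (le_max_right _ _) hi
    have h4 : (za : ℤ) ≤ ((b (i, x)).1 : ℤ) := by rw [h1]; linarith
    exact_mod_cast h4
  obtain ⟨h4, h5⟩ := hza (b (i, x)).1 hk
  constructor
  · show ((a * b) (i, x)).2 = x
    rw [Equiv.Perm.mul_apply, hbx]
    exact h4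
  · show (((a * b) (i, x)).1 : ℤ) = (i : ℤ) + (ma + mb) x
    rw [Equiv.Perm.mul_apply, hbx, h5, h1, Pi.add_apply]
    ring

lemma evTrans_pow {n : ℕ} {a : Perm (ℕ × Fin n)} {m : Fin n → ℤ}
    (h : EvTrans n (⇑a) m) : ∀ k : ℕ, EvTrans n (⇑(a ^ k)) (k • m)
  | 0 => by simpa using evTrans_one n
  | (k + 1) => by
      have := evTrans_mul (evTrans_pow h k) h
      rw [← pow_succ] at this
      convert this using 1
      ext x
      simp [add_smul]
      ring

/-- A finite-order element of the Houghton group eventually fixes every ray. -/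
lemma eventually_fixed {n : ℕ} {q : Perm (ℕ × Fin n)} (hq : q ∈ Houghton n)
    (hfo : IsOfFinOrder q) :
    ∃ N : ℕ, ∀ i : ℕ, N ≤ i → ∀ x : Fin n, q (i, x) = (i, x) := by
  obtain ⟨m, hm⟩ := hq
  obtain ⟨k, hk, hqk⟩ := hfo.exists_pow_eq_one
  have hm0 : m = 0 := by
    have h1 : EvTrans n (⇑(q ^ k)) (k • m) := evTrans_pow hm k
    have h2 : EvTrans n (⇑(q ^ k)) 0 := by rw [hqk]; exact evTrans_one n
    have h3 := evTrans_unique h1 h2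
    funext x
    have := congrFun h3 x
    simp only [Pi.smul_apply, Pi.zero_apply, smul_eq_mul] at this ⊢
    have hk' : (k : ℤ) ≠ 0 := by exact_mod_cast hk.ne'
    exact (mul_eq_zero.mp this).resolve_left hk'
  subst hm0
  choose z hz using hm
  refine ⟨Finset.univ.sup z, fun i hi x => ?_⟩
  obtain ⟨h1, h2⟩ := hz x i (le_trans (Finset.le_sup (Finset.mem_univ x)) hi)
  have : (q (i, x)).1 = i := by
    simpa using h2
  exact Prod.ext this h1

end HoughtonAux
namespace HoughtonAux
section Transfer
open Equiv Nat Finset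

variable {n : ℕ} (P : ℕ × Fin n → Prop) [DecidablePred P] (N : ℕ)

/-- Restriction of `P` to the ray through `x`. -/
def pRay (x : Fin n) : ℕ → Prop := fun i => P (i, x)

instance (x : Fin n) : DecidablePred (pRay P x) :=
  fun i => inferInstanceAs (Decidable (P (i, x)))

/-- number of exceptional points on ray `x`. -/
def cP (x : Fin n) : ℕ := #({i ∈ range N | ¬ P (i, x)})

variable (hbox : ∀ (i : ℕ) (x : Fin n), N ≤ i → P (i, x))

include hbox in
lemma pRay_infinite (x : Fin n) : (setOf (pRay P x)).Infinite := by
  apply Set.Infinite.mono (s := Set.Ici N)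
  · intro i hi
    exact hbox i x hi
  · exact Set.Ici_infinite N

include hbox in
lemma count_add (x : Fin n) {i : ℕ} (hi : N ≤ i) :
    count (pRay P x) i + cP P N x = i := by
  have h1 : count (pRay P x) i = #({j ∈ range i | P (j, x)}) := by
    rw [count_eq_card_filter_range]; rfl
  have h2 : ({j ∈ range i | ¬ P (j, x)}) = ({j ∈ range N | ¬ P (j, x)}) := by
    ext j
    simp only [mem_filter, mem_range]
    constructor
    · rintro ⟨hj, hnp⟩
      refine ⟨?_, hnp⟩
      by_contra hc
      exact hnp (hbox j x (le_of_not_gt hc))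
    · rintro ⟨hj, hnp⟩
      exact ⟨lt_of_lt_of_le hj hi, hnp⟩
  have h3 := Finset.card_filter_add_card_filter_not
    (s := range i) (p := fun j => P (j, x))
  rw [card_range] at h3
  rw [h1, cP, ← h2]
  exact h3

include hbox in
lemma nth_eq (x : Fin n) {k : ℕ} (hk : N ≤ k) :
    nth (pRay P x) k = k + cP P N x := by
  have h1 : count (pRay P x) (k + cP P N x) + cP P N x = k + cP P N x :=
    count_add P N hbox x (le_trans hk (Nat.le_add_right _ _))
  have h2 : count (pRay P x) (k + cP P N x) = k := by omega
  have h3 : pRay P x (k + cP P N x) := hbox _ x (le_trans hk (Nat.le_add_right _ _))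
  have := Nat.nth_count h3
  rw [h2] at this
  exact this

/-- The canonical bijection between `ℕ × Fin n` and the subset where `P` holds,
given raywise by the `nth` enumeration. -/
noncomputable def uEquiv : (ℕ × Fin n) ≃ {s : ℕ × Fin n // P s} where
  toFun s := ⟨(nth (pRay P s.2) s.1, s.2),
    nth_mem_of_infinite (pRay_infinite P N hbox s.2) s.1⟩
  invFun t := (count (pRay P t.1.2) t.1.1, t.1.2)
  left_inv := fun s => by
    obtain ⟨k, x⟩ := s
    exact Prod.ext (count_nth_of_infinite (pRay_infinite P N hbox x) k) rfl
  right_inv := fun t => by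
    obtain ⟨⟨i, x⟩, hp⟩ := t
    exact Subtype.ext (Prod.ext (Nat.nth_count hp) rfl)

/-- Conjugation by `uEquiv` as a group isomorphism of permutation groups. -/
noncomputable def conjE : Perm {s : ℕ × Fin n // P s} ≃* Perm (ℕ × Fin n) :=
  MulEquiv.mk' ((uEquiv P N hbox).symm.permCongr)
    (by intro f g; ext b : 1; simp [Equiv.permCongr_apply, Equiv.Perm.mul_apply])

lemma conjE_apply (f : Perm {s : ℕ × Fin n // P s}) (s : ℕ × Fin n) :
    conjE P N hbox f s =
      ((uEquiv P N hbox).symm (f (uEquiv P N hbox s))) := rfl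

lemma uEquiv_symm_apply (t : {s : ℕ × Fin n // P s}) :
    (uEquiv P N hbox).symm t = (count (pRay P t.1.2) t.1.1, t.1.2) := rfl

lemma uEquiv_apply_val (s : ℕ × Fin n) :
    ((uEquiv P N hbox s) : ℕ × Fin n) = (nth (pRay P s.2) s.1, s.2) := rfl

end Transfer
end HoughtonAux
namespace HoughtonAux
section Transfer2
open Equiv Nat Finset

variable {n : ℕ} (P : ℕ × Fin n → Prop) [DecidablePred P] (N : ℕ)
variable (hbox : ∀ (i : ℕ) (x : Fin n), N ≤ i → P (i, x))

include hbox in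
/-- Transfer, direction 1: if `h` is in the Houghton group and preserves `P`,
then the conjugate of its restriction is in the Houghton group. -/
lemma conjE_subtypePerm_mem (h : Perm (ℕ × Fin n)) (hpres : ∀ s, P s ↔ P (h s))
    (hh : h ∈ Houghton n) :
    conjE P N hbox (h.subtypePerm (fun s => (hpres s).symm)) ∈ Houghton n := by
  obtain ⟨m, hm⟩ := hh
  refine ⟨m, fun x => ?_⟩
  obtain ⟨z, hz⟩ := hm x
  refine ⟨max z (N + (-(m x)).toNat), fun i hi => ?_⟩
  set a := nth (pRay P x) i with hadef
  have hiN : N ≤ i := by omega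
  have ha : a = i + cP P N x := nth_eq P N hbox x hiN
  have hza : z ≤ a := by omega
  obtain ⟨hh2, hh1⟩ := hz a hza
  -- h (a, x) = (b, x)
  set b := (h (a, x)).1 with hbdef
  have hhb : h (a, x) = (b, x) := Prod.ext_iff.mpr ⟨rfl, hh2⟩
  have hbN : N ≤ b := by omega
  have hcount : count (pRay P x) b + cP P N x = b := count_add P N hbox x hbN
  have key : conjE P N hbox (h.subtypePerm (fun s => (hpres s).symm)) (i, x)
      = (count (pRay P ((h (a, x)).2)) ((h (a, x)).1), (h (a, x)).2) := rfl
  rw [hhb] at key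
  rw [key]
  refine ⟨rfl, ?_⟩
  show ((count (pRay P x) b : ℕ) : ℤ) = (i : ℤ) + m x
  omega

include hbox in
/-- Transfer, direction 2: if the conjugate of `f` is in the Houghton group,
then gluing `f` with any permutation of the complement is in the Houghton
group. -/
lemma subtypeCongr_mem (f : Perm {s : ℕ × Fin n // P s}) (g : Perm {s : ℕ × Fin n // ¬ P s})
    (hf : conjE P N hbox f ∈ Houghton n) :
    f.subtypeCongr g ∈ Houghton n := by
  obtain ⟨m, hm⟩ := hf
  refine ⟨m, fun x => ?_⟩
  obtain ⟨z, hz⟩ := hm x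
  refine ⟨N + cP P N x + z + (-(m x)).toNat, fun i hi => ?_⟩
  have hiN : N ≤ i := by omega
  have hP : P (i, x) := hbox i x hiN
  have hcount : count (pRay P x) i + cP P N x = i := count_add P N hbox x hiN
  set k := count (pRay P x) i with hkdef
  have hu : uEquiv P N hbox (k, x) = ⟨(i, x), hP⟩ :=
    Subtype.ext (Prod.ext (Nat.nth_count hP) rfl)
  obtain ⟨hw2, hw1⟩ := hz k (by omega)
  set w := conjE P N hbox f (k, x) with hwdef
  have hww : w = (w.1, x) := Prod.ext_iff.mpr ⟨rfl, hw2⟩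
  have hwN : N ≤ w.1 := by omega
  have hnth : nth (pRay P x) w.1 = w.1 + cP P N x := nth_eq P N hbox x hwN
  -- f (u (k,x)) = u w
  have hfu : f (uEquiv P N hbox (k, x)) = uEquiv P N hbox w := by
    rw [hwdef, conjE_apply]
    exact (Equiv.apply_symm_apply _ _).symm
  have hfval : ((f ⟨(i, x), hP⟩ : {s : ℕ × Fin n // P s}) : ℕ × Fin n)
      = (nth (pRay P x) w.1, x) := by
    rw [← hu, hfu, uEquiv_apply_val]
    rw [hww]
  have happ : (f.subtypeCongr g) (i, x) = ((f ⟨(i, x), hP⟩ : {s : ℕ × Fin n // P s}) : ℕ × Fin n) :=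
    Perm.subtypeCongr.left_apply f g hP
  rw [happ, hfval, hnth]
  refine ⟨rfl, ?_⟩
  show ((w.1 + cP P N x : ℕ) : ℤ) = (i : ℤ) + m x
  omega

end Transfer2
end HoughtonAux
open Equiv HoughtonAux in
/-- If `Q` is a finite subgroup of Houghton's group `H_n`,
then the centralizer `C_{H_n}(Q)` is isomorphic to `H_n × E` for some finite
group `E`; in particular it has a finite-index subgroup isomorphic to
`H_n`. -/
theorem houghton_centralizer_of_finite_subgroup (n : ℕ) (hn : 1 ≤ n)
    (Q : Subgroup (Equiv.Perm (ℕ × Fin n))) (hQ : Q ≤ Houghton n)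
    (hfin : Finite Q) :
    ∃ (E : Type) (_ : Group E) (_ : Finite E),
      Nonempty
        (↥(Houghton n ⊓ Subgroup.centralizer (Q : Set (Equiv.Perm (ℕ × Fin n)))) ≃*
          (↥(Houghton n) × E)) ∧
      ∃ K : Subgroup
          ↥(Houghton n ⊓ Subgroup.centralizer (Q : Set (Equiv.Perm (ℕ × Fin n)))),
        K.FiniteIndex ∧ Nonempty (↥K ≃* ↥(Houghton n)) := by
  classical
  haveI : Fintype Q := Fintype.ofFinite Q
  -- Step 1: a uniform bound beyond which every element of `Q` acts trivially.
  have hNex : ∀ q : Q, ∃ N : ℕ, ∀ i : ℕ, N ≤ i → ∀ x : Fin n,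
      (q : Perm (ℕ × Fin n)) (i, x) = (i, x) := by
    intro q
    apply eventually_fixed (hQ q.2)
    have hfo : IsOfFinOrder q := isOfFinOrder_of_finite q
    obtain ⟨k, hk, hqk⟩ := hfo.exists_pow_eq_one
    refine isOfFinOrder_iff_pow_eq_one.mpr ⟨k, hk, ?_⟩
    have := congrArg (Subgroup.subtype Q) hqk
    simpa using this
  choose Nf hNf using hNex
  set Nz := Finset.univ.sup Nf with hNzdef
  have hN : ∀ (q : Q) (i : ℕ), Nz ≤ i → ∀ x : Fin n,
      (q : Perm (ℕ × Fin n)) (i, x) = (i, x) :=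
    fun q i hi x => hNf q i (le_trans (Finset.le_sup (Finset.mem_univ q)) hi) x
  -- Step 2: the fixed-point set of `Q` and the machinery on it.
  set P : ℕ × Fin n → Prop := fun s => ∀ q : Q, (q : Perm (ℕ × Fin n)) s = s
    with hPdef
  have hbox : ∀ (i : ℕ) (x : Fin n), Nz ≤ i → P (i, x) :=
    fun i x hi q => hN q i hi x
  set C := Houghton n ⊓ Subgroup.centralizer (Q : Set (Equiv.Perm (ℕ × Fin n)))
    with hCdef
  have memC : ∀ h : ↥C, (h : Perm (ℕ × Fin n)) ∈ Houghton n ∧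
      (h : Perm (ℕ × Fin n)) ∈ Subgroup.centralizer (Q : Set (Equiv.Perm (ℕ × Fin n))) :=
    fun h => Subgroup.mem_inf.mp h.2
  have hcomm : ∀ (h : ↥C) (q : Q) (s : ℕ × Fin n),
      (q : Perm (ℕ × Fin n)) ((h : Perm (ℕ × Fin n)) s)
        = (h : Perm (ℕ × Fin n)) ((q : Perm (ℕ × Fin n)) s) := by
    intro h q s
    have h1 := (Subgroup.mem_centralizer_iff.mp (memC h).2) (q : Perm (ℕ × Fin n)) q.2
    have h2 := congrFun (congrArg (fun (e : Perm (ℕ × Fin n)) => ⇑e) h1) s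
    simpa [Equiv.Perm.mul_apply] using h2
  have hQfixP : ∀ (q : Q) (s : ℕ × Fin n), P s → (q : Perm (ℕ × Fin n)) s = s :=
    fun q _s hs => hs q
  have hQP : ∀ (q : Q) (s : ℕ × Fin n), P ((q : Perm (ℕ × Fin n)) s) ↔ P s := by
    intro q s
    constructor
    · intro hqs
      have h1 := hqs q⁻¹
      have h2 : ((q⁻¹ : Q) : Perm (ℕ × Fin n)) = ((q : Perm (ℕ × Fin n)))⁻¹ := rfl
      rw [h2, Equiv.Perm.inv_def, Equiv.symm_apply_apply] at h1
      -- h1 : s = q s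
      rw [h1]
      exact hqs
    · intro hs
      rw [hQfixP q s hs]
      exact hs
  have hCpresF : ∀ (h : ↥C) (s : ℕ × Fin n), P s → P ((h : Perm (ℕ × Fin n)) s) := by
    intro h s hs q
    rw [hcomm h q s, hQfixP q s hs]
  have hCpres : ∀ (h : ↥C) (s : ℕ × Fin n), P s ↔ P ((h : Perm (ℕ × Fin n)) s) := by
    intro h s
    refine ⟨hCpresF h s, fun hs => ?_⟩
    have h2 := hCpresF h⁻¹ _ hs
    have h3 : ((h⁻¹ : ↥C) : Perm (ℕ × Fin n)) = ((h : Perm (ℕ × Fin n)))⁻¹ := rfl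
    rwa [h3, Equiv.Perm.inv_def, Equiv.symm_apply_apply] at h2
  -- The two pieces.
  have hTfin : Finite {s : ℕ × Fin n // ¬ P s} := by
    refine Finite.of_injective
      (fun t => ((⟨t.1.1, ?_⟩ : Fin Nz), t.1.2)) ?_
    · by_contra hc
      exact t.2 (hbox t.1.1 t.1.2 (le_of_not_gt hc))
    · intro a b hab
      have h1 : a.1.1 = b.1.1 := congrArg (fun y : Fin Nz × Fin n => (y.1 : ℕ)) hab
      have h2 : a.1.2 = b.1.2 := congrArg (fun y : Fin Nz × Fin n => y.2) hab
      exact Subtype.ext (Prod.ext h1 h2)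
  -- restriction of elements of Q to the complement
  set qT : Q → Perm {s : ℕ × Fin n // ¬ P s} :=
    fun q => (q : Perm (ℕ × Fin n)).subtypePerm (fun s => not_congr (hQP q s))
    with hqTdef
  set E0 : Subgroup (Perm {s : ℕ × Fin n // ¬ P s}) :=
    Subgroup.centralizer (Set.range qT) with hE0def
  set HFix : Subgroup (Perm {s : ℕ × Fin n // P s}) :=
    (Houghton n).comap (conjE P Nz hbox).toMonoidHom with hHFixdef
  -- restriction maps
  have hrestF_mem : ∀ h : ↥C,
      (h : Perm (ℕ × Fin n)).subtypePerm (fun s => (hCpres h s).symm) ∈ HFix :=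
    fun h => Subgroup.mem_comap.mpr
      (conjE_subtypePerm_mem P Nz hbox _ (hCpres h) (memC h).1)
  have hrestT_mem : ∀ h : ↥C,
      (h : Perm (ℕ × Fin n)).subtypePerm
        (fun s => (not_congr (hCpres h s)).symm) ∈ E0 := by
    intro h
    rw [hE0def, Subgroup.mem_centralizer_iff]
    rintro g ⟨q, rfl⟩
    refine Equiv.ext fun t => Subtype.ext ?_
    exact hcomm h q t.1
  -- gluing
  have hglue_memH : ∀ (f : ↥HFix) (g : ↥E0),
      Perm.subtypeCongr (f : Perm {s : ℕ × Fin n // P s})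
        (g : Perm {s : ℕ × Fin n // ¬ P s}) ∈ Houghton n :=
    fun f g => subtypeCongr_mem P Nz hbox _ _ (Subgroup.mem_comap.mp f.2)
  have hglue_memC : ∀ (f : ↥HFix) (g : ↥E0),
      Perm.subtypeCongr (f : Perm {s : ℕ × Fin n // P s})
        (g : Perm {s : ℕ × Fin n // ¬ P s}) ∈ C := by
    intro f g
    rw [hCdef]
    refine Subgroup.mem_inf.mpr ⟨hglue_memH f g, ?_⟩
    rw [Subgroup.mem_centralizer_iff]
    intro q hq
    refine Equiv.ext fun s => ?_
    show q (Perm.subtypeCongr _ _ s) = Perm.subtypeCongr _ _ (q s)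
    by_cases hs : P s
    · have hqs : q s = s := hQfixP ⟨q, hq⟩ s hs
      rw [hqs, Perm.subtypeCongr.left_apply _ _ hs]
      exact hQfixP ⟨q, hq⟩ _ ((f : Perm {s : ℕ × Fin n // P s}) ⟨s, hs⟩).2
    · have hqs : ¬ P (q s) := fun hc => hs ((hQP ⟨q, hq⟩ s).mp hc)
      rw [Perm.subtypeCongr.right_apply _ _ hs, Perm.subtypeCongr.right_apply _ _ hqs]
      -- use that g centralizes qT ⟨q, hq⟩
      have h1 := (Subgroup.mem_centralizer_iff.mp g.2) (qT ⟨q, hq⟩)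
        (Set.mem_range_self _)
      have h2 := congrFun (congrArg
        (fun (e : Perm {s : ℕ × Fin n // ¬ P s}) => ⇑e) h1) ⟨s, hs⟩
      have h3 := congrArg Subtype.val h2
      simpa [Equiv.Perm.mul_apply, hqTdef, Equiv.Perm.subtypePerm_apply] using h3
  -- the isomorphism with the product
  let Φ : ↥C ≃* (↥HFix × ↥E0) :=
    { toFun := fun h =>
        (⟨(h : Perm (ℕ × Fin n)).subtypePerm (fun s => (hCpres h s).symm), hrestF_mem h⟩,
         ⟨(h : Perm (ℕ × Fin n)).subtypePerm (fun s => (not_congr (hCpres h s)).symm),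
           hrestT_mem h⟩)
      invFun := fun p =>
        ⟨Perm.subtypeCongr (p.1 : Perm {s : ℕ × Fin n // P s})
          (p.2 : Perm {s : ℕ × Fin n // ¬ P s}), hglue_memC p.1 p.2⟩
      left_inv := by
        intro h
        refine Subtype.ext (Equiv.ext fun s => ?_)
        by_cases hs : P s
        · rw [Perm.subtypeCongr.left_apply _ _ hs]; rfl
        · rw [Perm.subtypeCongr.right_apply _ _ hs]; rfl
      right_inv := by
        intro p
        refine Prod.ext (Subtype.ext (Equiv.ext fun t => Subtype.ext ?_))
          (Subtype.ext (Equiv.ext fun t => Subtype.ext ?_))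
        · show Perm.subtypeCongr _ _ (t : ℕ × Fin n) = _
          rw [Perm.subtypeCongr.left_apply _ _ t.2]
        · show Perm.subtypeCongr _ _ (t : ℕ × Fin n) = _
          rw [Perm.subtypeCongr.right_apply _ _ t.2]
      map_mul' := by
        intro a b
        refine Prod.ext (Subtype.ext (Equiv.ext fun t => Subtype.ext rfl))
          (Subtype.ext (Equiv.ext fun t => Subtype.ext rfl)) }
  -- identification of the first factor with the Houghton group
  have hmap : Subgroup.map (conjE P Nz hbox).toMonoidHom HFix = Houghton n := by
    rw [hHFixdef]
    exact Subgroup.map_comap_eq_self_of_surjective (conjE P Nz hbox).surjective _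
  let iso2 : ↥HFix ≃* ↥(Houghton n) :=
    ((conjE P Nz hbox).subgroupMap HFix).trans (MulEquiv.subgroupCongr hmap)
  let total : ↥C ≃* (↥(Houghton n) × ↥E0) :=
    Φ.trans (iso2.prodCongr (MulEquiv.refl ↥E0))
  haveI : Finite (↥E0) := inferInstance
  refine ⟨↥E0, inferInstance, inferInstance, ⟨total⟩, ?_⟩
  -- the finite index subgroup
  set f : ↥C →* ↥E0 := (MonoidHom.snd ↥(Houghton n) ↥E0).comp total.toMonoidHom
    with hfdef
  refine ⟨f.ker, Subgroup.finiteIndex_ker f, ?_⟩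
  have h1 : f.ker = Subgroup.comap total.toMonoidHom
      (MonoidHom.snd ↥(Houghton n) ↥E0).ker :=
    (MonoidHom.comap_ker _ _).symm
  have h3 : Subgroup.map total.toMonoidHom f.ker
      = (⊤ : Subgroup ↥(Houghton n)).prod ⊥ := by
    rw [h1, Subgroup.map_comap_eq_self_of_surjective total.surjective,
      MonoidHom.ker_snd]
  exact ⟨(total.subgroupMap f.ker).trans ((MulEquiv.subgroupCongr h3).trans
    ((Subgroup.prodEquiv ⊤ ⊥).trans
      ((Subgroup.topEquiv.prodCongr (MulEquiv.refl _)).trans MulEquiv.prodUnique)))⟩
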